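/- Let γ ≥ 3 and κ ≥ 3 be integers and let p be a probability-distribution matrix with coupling polynomial f. Sample, independently for each position (r,c) ∈ {1,…,γ}×{1,…,κ}, a pair (K(r,c), R(r,c)) ∈ {0,…,m}×{0,…,M−1} taking the value (a,c') with probability p_{a,c'}. Call an ordered tuple (i_1,j_1,i_2,j_2,i_3,j_3), where i_1,i_2,i_3 are pairwise distinct rows and j_1,j_2,j_3 are pairwise distinct columns, active if Σ_{k=1}^{3}(K(i_k,j_k) − K(i_k,j_{k+1})) = 0 and M divides Σ_{k=1}^{3}(R(i_k,j_k) − R(i_k,j_{k+1})) (indices cyclic, j_4 = j_1). Then the expected number of active ordered tuples equals 36·C(γ,3)·C(κ,3)·Σ_{M∣b}[f^3(X,Y) f^3(X^{−1},Y^{−1})]_{0,b}. Since each cycle-6 candidate corresponds to exactly 6 ordered tuples, the expected number N_6(p) of cycle-6 candidates of the γ×κ all-one base matrix that remain active in the MD protograph equals 6·C(γ,3)·C(κ,3)·Σ_{M∣b}[f^3(X,Y) f^3(X^{−1},Y^{−1})]_{0,b}. -/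

import Mathlib

open scoped Classical

set_option maxHeartbeats 1000000

private lemma sum_factor {S ι σ : Type*} [Fintype S] [Fintype ι] [Fintype σ]
    [Fintype (ι → S)] [Fintype (σ → S)]
    (w : S → ℝ) (hw : ∑ s, w s = 1) (φ : σ → ι)
    (hφ : Function.Injective φ) (g : (σ → S) → ℝ) :
    ∑ ω : ι → S, (∏ i, w (ω i)) * g (ω ∘ φ) = ∑ a : σ → S, (∏ j, w (a j)) * g a := by
  classical
  let e : σ ⊕ ↥(Set.range φ)ᶜ ≃ ι :=
    (Equiv.sumCongr (Equiv.ofInjective φ hφ) (Equiv.refl _)).trans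
      (Equiv.Set.sumCompl (Set.range φ))
  have he : ∀ j, e (Sum.inl j) = φ j := fun j => by
    simp [e, Equiv.Set.sumCompl_apply_inl, Equiv.ofInjective]
  let E : ((σ → S) × (↥(Set.range φ)ᶜ → S)) ≃ (ι → S) :=
    (Equiv.sumArrowEquivProdArrow σ _ S).symm.trans (Equiv.arrowCongr e (Equiv.refl S))
  rw [← Equiv.sum_comp E (fun ω => (∏ i, w (ω i)) * g (ω ∘ φ)), Fintype.sum_prod_type]
  have hE : ∀ (a : σ → S) (b : ↥(Set.range φ)ᶜ → S),
      E (a, b) = Sum.elim a b ∘ e.symm := fun a b => rfl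
  have h1 : ∀ (a : σ → S) (b : ↥(Set.range φ)ᶜ → S), (E (a, b)) ∘ φ = a := by
    intro a b
    funext j
    have : e.symm (φ j) = Sum.inl j := by rw [← he j, Equiv.symm_apply_apply]
    simp [hE, Function.comp, this]
  have h2 : ∀ (a : σ → S) (b : ↥(Set.range φ)ᶜ → S),
      (∏ i, w (E (a, b) i)) = (∏ j, w (a j)) * ∏ z, w (b z) := by
    intro a b
    rw [← Equiv.prod_comp e (fun i => w (E (a, b) i))]
    have : ∀ x, E (a, b) (e x) = Sum.elim a b x := by
      intro x; rw [hE]; simp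
    simp only [this]
    rw [Fintype.prod_sum_type]; simp
  simp only [h1, h2]
  have h3 : ∑ b : ↥(Set.range φ)ᶜ → S, ∏ z, w (b z) = 1 := by
    rw [← Fintype.prod_sum (fun (_ : ↥(Set.range φ)ᶜ) (s : S) => w s)]
    simp [hw]
  calc ∑ a : σ → S, ∑ b : ↥(Set.range φ)ᶜ → S, ((∏ j, w (a j)) * ∏ z, w (b z)) * g (a)
      = ∑ a : σ → S, ((∏ j, w (a j)) * g a) * ∑ b : ↥(Set.range φ)ᶜ → S, ∏ z, w (b z) := by
        congr 1; funext a; rw [Finset.mul_sum]; congr 1; funext b; ring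
    _ = _ := by simp [h3]


/-- The coupling polynomial with exponents scaled by `s`:
`f(X^s, Y^s) = ∑_{i=0}^{m} ∑_{j=0}^{M-1} p_{i,j} X^{s·i} Y^{s·j}`,
as an element of the group algebra of `ℤ × ℤ` over `ℝ`. -/
noncomputable def couplingPoly (m M : ℕ) (p : Fin (m + 1) → Fin M → ℝ) (s : ℤ) :
    AddMonoidAlgebra ℝ (ℤ × ℤ) :=
  ∑ i : Fin (m + 1), ∑ j : Fin M,
    AddMonoidAlgebra.single (s * (i : ℤ), s * (j : ℤ)) (p i j)

private lemma coeff_eq (m M : ℕ) (p : Fin (m + 1) → Fin M → ℝ) :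
    (∑ᶠ b ∈ {b : ℤ | (M : ℤ) ∣ b},
        (couplingPoly m M p 1 ^ 3 * couplingPoly m M p (-1) ^ 3).coeff (0, b))
    = ∑ q : (Fin 3 → Fin (m + 1) × Fin M) × (Fin 3 → Fin (m + 1) × Fin M),
        if ((∑ k : Fin 3, (((q.1 k).1 : ℤ) - ((q.2 k).1 : ℤ))) = 0 ∧
            (M : ℤ) ∣ ∑ k : Fin 3, (((q.1 k).2 : ℤ) - ((q.2 k).2 : ℤ)))
        then (∏ k : Fin 3, p (q.1 k).1 (q.1 k).2) * (∏ k : Fin 3, p (q.2 k).1 (q.2 k).2)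
        else 0 := by
  classical
  set S := Fin (m + 1) × Fin M with hS
  set w : S → ℝ := fun u => p u.1 u.2 with hwdef
  set e1 : S → ℤ × ℤ := fun u => ((u.1 : ℤ), (u.2 : ℤ)) with he1
  set e2 : S → ℤ × ℤ := fun u => (-(u.1 : ℤ), -(u.2 : ℤ)) with he2
  have hf1 : couplingPoly m M p 1 = ∑ u : S, AddMonoidAlgebra.single (e1 u) (w u) := by
    rw [couplingPoly, Fintype.sum_prod_type]
    simp [he1, hwdef]
  have hf2 : couplingPoly m M p (-1) = ∑ u : S, AddMonoidAlgebra.single (e2 u) (w u) := by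
    rw [couplingPoly, Fintype.sum_prod_type]
    simp [he2, hwdef]
  have hpow : ∀ e : S → ℤ × ℤ,
      (∑ u : S, AddMonoidAlgebra.single (e u) (w u)) ^ 3
        = ∑ a : Fin 3 → S,
            AddMonoidAlgebra.single (∑ k, e (a k)) (∏ k, w (a k)) := by
    intro e
    rw [Fintype.sum_pow]
    exact Finset.sum_congr rfl fun a _ => AddMonoidAlgebra.prod_single _ _ _
  set Ea : (Fin 3 → S) × (Fin 3 → S) → ℤ × ℤ :=
    fun q => (∑ k, e1 (q.1 k)) + ∑ k, e2 (q.2 k) with hEa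
  set W : (Fin 3 → S) × (Fin 3 → S) → ℝ :=
    fun q => (∏ k, w (q.1 k)) * ∏ k, w (q.2 k) with hWdef
  have hprod : couplingPoly m M p 1 ^ 3 * couplingPoly m M p (-1) ^ 3
      = ∑ q : (Fin 3 → S) × (Fin 3 → S), AddMonoidAlgebra.single (Ea q) (W q) := by
    rw [hf1, hf2, hpow, hpow, Finset.sum_mul_sum, Fintype.sum_prod_type]
    exact Finset.sum_congr rfl fun a _ => Finset.sum_congr rfl fun a' _ =>
      AddMonoidAlgebra.single_mul_single _ _ _ _
  have hcoeff : ∀ b : ℤ,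
      (couplingPoly m M p 1 ^ 3 * couplingPoly m M p (-1) ^ 3).coeff (0, b)
        = ∑ q : (Fin 3 → S) × (Fin 3 → S), if Ea q = ((0 : ℤ), b) then W q else 0 := by
    intro b
    rw [hprod, AddMonoidAlgebra.coeff_sum, Finsupp.finset_sum_apply]
    refine Finset.sum_congr rfl fun q _ => ?_
    rw [AddMonoidAlgebra.coeff_single_apply]
  rw [finsum_mem_def]
  have hind : (Set.indicator {b : ℤ | (M : ℤ) ∣ b}
        fun b => (couplingPoly m M p 1 ^ 3 * couplingPoly m M p (-1) ^ 3).coeff (0, b))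
      = fun b => ∑ q : (Fin 3 → S) × (Fin 3 → S),
          if ((M : ℤ) ∣ b ∧ Ea q = ((0 : ℤ), b)) then W q else 0 := by
    funext b
    rw [Set.indicator_apply]
    by_cases hb : b ∈ {b : ℤ | (M : ℤ) ∣ b}
    · rw [if_pos hb, hcoeff]
      exact Finset.sum_congr rfl fun q _ => by simp [hb.out]
    · rw [if_neg hb]
      symm
      refine Finset.sum_eq_zero fun q _ => if_neg fun h => hb h.1
  rw [hind]
  rw [finsum_sum_comm Finset.univ
      (fun b (q : (Fin 3 → S) × (Fin 3 → S)) =>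
        if ((M : ℤ) ∣ b ∧ Ea q = ((0 : ℤ), b)) then W q else 0)
      (fun q _ => Set.Finite.subset (Set.finite_singleton ((Ea q).2)) (by
        intro b hb
        simp only [Function.mem_support, ne_eq] at hb
        by_contra hne
        apply hb
        refine if_neg fun h => hne ?_
        simp [h.2]))]
  refine Finset.sum_congr rfl fun q _ => ?_
  rw [finsum_eq_single _ ((Ea q).2) (fun b hb => if_neg fun h => hb (by simp [h.2]))]
  have h2 : (Ea q).2 = ∑ k : Fin 3, (((q.1 k).2 : ℤ) - ((q.2 k).2 : ℤ)) := by
    simp [hEa, he1, he2, Prod.snd_sum, sub_eq_add_neg, Finset.sum_add_distrib,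
      Finset.sum_neg_distrib]
  have hfst : (Ea q).1 = ∑ k : Fin 3, (((q.1 k).1 : ℤ) - ((q.2 k).1 : ℤ)) := by
    simp [hEa, he1, he2, Prod.fst_sum, sub_eq_add_neg, Finset.sum_add_distrib,
      Finset.sum_neg_distrib]
  have h1iff : (Ea q = ((0 : ℤ), (Ea q).2))
      ↔ (∑ k : Fin 3, (((q.1 k).1 : ℤ) - ((q.2 k).1 : ℤ))) = 0 := by
    rw [Prod.ext_iff]
    simp [hfst]
  rw [h2] at h1iff ⊢
  refine if_congr ?_ rfl rfl
  rw [and_comm]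
  exact and_congr_left fun _ => h1iff


/-- Sample, independently for each position of the `γ × κ`
all-one base matrix, a partition/relocation pair with law `p`. An ordered tuple
`(i₁,j₁,i₂,j₂,i₃,j₃)` with distinct rows `i` and distinct columns `j` is
active if `Σₖ (K(iₖ,jₖ) − K(iₖ,j_{k+1})) = 0` and
`M ∣ Σₖ (R(iₖ,jₖ) − R(iₖ,j_{k+1}))` (cyclically, `j₄ = j₁`).
The expected number of active ordered tuples equals
`36·C(γ,3)·C(κ,3)·Σ_{M∣b}[f³(X,Y) f³(X⁻¹,Y⁻¹)]_{0,b}`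
(each cycle-6 candidate corresponds to exactly 6 ordered tuples, so the
expected number of active cycle-6 candidates is
`6·C(γ,3)·C(κ,3)·Σ_{M∣b}[f³ f̄³]_{0,b}`). -/
theorem expected_active_cycle6_tuples (m M : ℕ) (hM : 1 ≤ M)
    (γ κ : ℕ) (hγ : 3 ≤ γ) (hκ : 3 ≤ κ)
    (p : Fin (m + 1) → Fin M → ℝ)
    (hp : ∀ i j, 0 ≤ p i j)
    (hsum : ∑ i : Fin (m + 1), ∑ j : Fin M, p i j = 1) :
    (∑ ω : Fin γ × Fin κ → Fin (m + 1) × Fin M,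
      (∏ pos : Fin γ × Fin κ, p (ω pos).1 (ω pos).2) *
        ((Finset.univ.filter
          (fun t : (Fin 3 → Fin γ) × (Fin 3 → Fin κ) =>
            Function.Injective t.1 ∧ Function.Injective t.2 ∧
            (∑ k : Fin 3,
              (((ω (t.1 k, t.2 k)).1 : ℤ) - ((ω (t.1 k, t.2 (k + 1))).1 : ℤ))) = 0 ∧
            (M : ℤ) ∣ ∑ k : Fin 3,
              (((ω (t.1 k, t.2 k)).2 : ℤ) - ((ω (t.1 k, t.2 (k + 1))).2 : ℤ)))).card : ℝ)) =
    36 * (γ.choose 3) * (κ.choose 3) *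
      ∑ᶠ b ∈ {b : ℤ | (M : ℤ) ∣ b},
        (couplingPoly m M p 1 ^ 3 * couplingPoly m M p (-1) ^ 3).coeff (0, b) := by
  classical
  set S := Fin (m + 1) × Fin M with hS
  set w : S → ℝ := fun u => p u.1 u.2 with hwdef
  have hw : ∑ s : S, w s = 1 := by rw [Fintype.sum_prod_type]; exact hsum
  set Q : ℝ := ∑ q : (Fin 3 → S) × (Fin 3 → S),
      if ((∑ k : Fin 3, (((q.1 k).1 : ℤ) - ((q.2 k).1 : ℤ))) = 0 ∧
          (M : ℤ) ∣ ∑ k : Fin 3, (((q.1 k).2 : ℤ) - ((q.2 k).2 : ℤ)))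
      then (∏ k : Fin 3, p (q.1 k).1 (q.1 k).2) * (∏ k : Fin 3, p (q.2 k).1 (q.2 k).2)
      else 0 with hQ
  have hne : ∀ k : Fin 3, k ≠ k + 1 := by decide
  have key : ∀ t : (Fin 3 → Fin γ) × (Fin 3 → Fin κ),
      (∑ ω : Fin γ × Fin κ → S,
        (∏ pos : Fin γ × Fin κ, p (ω pos).1 (ω pos).2) *
          (if (Function.Injective t.1 ∧ Function.Injective t.2 ∧
            (∑ k : Fin 3,
              (((ω (t.1 k, t.2 k)).1 : ℤ) - ((ω (t.1 k, t.2 (k + 1))).1 : ℤ))) = 0 ∧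
            (M : ℤ) ∣ ∑ k : Fin 3,
              (((ω (t.1 k, t.2 k)).2 : ℤ) - ((ω (t.1 k, t.2 (k + 1))).2 : ℤ)))
           then (1 : ℝ) else 0))
      = if (Function.Injective t.1 ∧ Function.Injective t.2) then Q else 0 := by
    intro t
    by_cases hinj : Function.Injective t.1 ∧ Function.Injective t.2
    · obtain ⟨h1, h2⟩ := hinj
      rw [if_pos ⟨h1, h2⟩]
      set φ : (Fin 3 ⊕ Fin 3) → Fin γ × Fin κ :=
        Sum.elim (fun k => (t.1 k, t.2 k)) (fun k => (t.1 k, t.2 (k + 1))) with hφdef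
      have hφ : Function.Injective φ := by
        rintro (x | x) (y | y) hxy <;>
          simp only [hφdef, Sum.elim_inl, Sum.elim_inr, Prod.mk.injEq] at hxy
        · exact congrArg Sum.inl (h1 hxy.1)
        · exact absurd (h2 hxy.2) (by rw [h1 hxy.1]; exact hne y)
        · exact absurd (h2 hxy.2) (by rw [h1 hxy.1]; exact (hne y).symm)
        · exact congrArg Sum.inr (h1 hxy.1)
      have hmain := sum_factor w hw φ hφ (fun v =>
        if ((∑ k : Fin 3, (((v (Sum.inl k)).1 : ℤ) - ((v (Sum.inr k)).1 : ℤ))) = 0 ∧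
            (M : ℤ) ∣ ∑ k : Fin 3, (((v (Sum.inl k)).2 : ℤ) - ((v (Sum.inr k)).2 : ℤ)))
        then (1 : ℝ) else 0)
      simp only [Function.comp_apply, hφdef, Sum.elim_inl, Sum.elim_inr] at hmain
      refine Eq.trans (Finset.sum_congr rfl fun ω _ => ?_) (hmain.trans ?_)
      · congr 1
        exact if_congr (by tauto) rfl rfl
      · rw [← Equiv.sum_comp (Equiv.sumArrowEquivProdArrow (Fin 3) (Fin 3) S).symm, hQ]
        rw [Fintype.sum_prod_type]
        rw [Fintype.sum_prod_type]
        refine Finset.sum_congr rfl fun a _ => Finset.sum_congr rfl fun a' _ => ?_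
        have hsym : ∀ x, (Equiv.sumArrowEquivProdArrow (Fin 3) (Fin 3) S).symm (a, a') x
            = Sum.elim a a' x := fun x => by cases x <;> rfl
        simp only [hsym, Sum.elim_inl, Sum.elim_inr]
        rw [Fintype.prod_sum_type]
        simp only [Sum.elim_inl, Sum.elim_inr, hwdef]
        rw [mul_ite, mul_one, mul_zero]
    · rw [if_neg hinj]
      refine Finset.sum_eq_zero fun ω _ => ?_
      rw [if_neg (fun h => hinj ⟨h.1, h.2.1⟩), mul_zero]
  have count1 : ∀ n : ℕ,
      (Finset.univ.filter fun f : Fin 3 → Fin n => Function.Injective f).card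
        = 6 * n.choose 3 := by
    intro n
    rw [← Fintype.card_subtype,
      Fintype.card_congr (Equiv.subtypeInjectiveEquivEmbedding (Fin 3) (Fin n)),
      Fintype.card_embedding_eq, Fintype.card_fin, Fintype.card_fin,
      Nat.descFactorial_eq_factorial_mul_choose]
    norm_num [Nat.factorial]
  have hcount : (Finset.univ.filter
      fun t : (Fin 3 → Fin γ) × (Fin 3 → Fin κ) =>
        Function.Injective t.1 ∧ Function.Injective t.2).card
      = (6 * γ.choose 3) * (6 * κ.choose 3) := by
    rw [← Finset.univ_product_univ, Finset.filter_product, Finset.card_product,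
      count1 γ, count1 κ]
  have expand : ∀ ω : Fin γ × Fin κ → S,
      ((Finset.univ.filter
          (fun t : (Fin 3 → Fin γ) × (Fin 3 → Fin κ) =>
            Function.Injective t.1 ∧ Function.Injective t.2 ∧
            (∑ k : Fin 3,
              (((ω (t.1 k, t.2 k)).1 : ℤ) - ((ω (t.1 k, t.2 (k + 1))).1 : ℤ))) = 0 ∧
            (M : ℤ) ∣ ∑ k : Fin 3,
              (((ω (t.1 k, t.2 k)).2 : ℤ) - ((ω (t.1 k, t.2 (k + 1))).2 : ℤ)))).card : ℝ)
        = ∑ t : (Fin 3 → Fin γ) × (Fin 3 → Fin κ),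
            if (Function.Injective t.1 ∧ Function.Injective t.2 ∧
            (∑ k : Fin 3,
              (((ω (t.1 k, t.2 k)).1 : ℤ) - ((ω (t.1 k, t.2 (k + 1))).1 : ℤ))) = 0 ∧
            (M : ℤ) ∣ ∑ k : Fin 3,
              (((ω (t.1 k, t.2 k)).2 : ℤ) - ((ω (t.1 k, t.2 (k + 1))).2 : ℤ)))
            then (1 : ℝ) else 0 := by
    intro ω
    rw [Finset.card_filter]
    push_cast
    rfl
  calc (∑ ω : Fin γ × Fin κ → S,
      (∏ pos : Fin γ × Fin κ, p (ω pos).1 (ω pos).2) *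
        ((Finset.univ.filter
          (fun t : (Fin 3 → Fin γ) × (Fin 3 → Fin κ) =>
            Function.Injective t.1 ∧ Function.Injective t.2 ∧
            (∑ k : Fin 3,
              (((ω (t.1 k, t.2 k)).1 : ℤ) - ((ω (t.1 k, t.2 (k + 1))).1 : ℤ))) = 0 ∧
            (M : ℤ) ∣ ∑ k : Fin 3,
              (((ω (t.1 k, t.2 k)).2 : ℤ) - ((ω (t.1 k, t.2 (k + 1))).2 : ℤ)))).card : ℝ))
      = ∑ t : (Fin 3 → Fin γ) × (Fin 3 → Fin κ),
          ∑ ω : Fin γ × Fin κ → S,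
            (∏ pos : Fin γ × Fin κ, p (ω pos).1 (ω pos).2) *
              (if (Function.Injective t.1 ∧ Function.Injective t.2 ∧
                (∑ k : Fin 3,
                  (((ω (t.1 k, t.2 k)).1 : ℤ) - ((ω (t.1 k, t.2 (k + 1))).1 : ℤ))) = 0 ∧
                (M : ℤ) ∣ ∑ k : Fin 3,
                  (((ω (t.1 k, t.2 k)).2 : ℤ) - ((ω (t.1 k, t.2 (k + 1))).2 : ℤ)))
               then (1 : ℝ) else 0) := by
        rw [Finset.sum_comm]
        exact Finset.sum_congr rfl fun ω _ => by rw [expand ω, Finset.mul_sum]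
    _ = ∑ t : (Fin 3 → Fin γ) × (Fin 3 → Fin κ),
          if (Function.Injective t.1 ∧ Function.Injective t.2) then Q else 0 :=
        Finset.sum_congr rfl fun t _ => key t
    _ = ((6 * γ.choose 3) * (6 * κ.choose 3) : ℕ) * Q := by
        rw [Finset.sum_ite, Finset.sum_const, Finset.sum_const_zero, add_zero,
          hcount, nsmul_eq_mul]
    _ = 36 * (γ.choose 3) * (κ.choose 3) *
          ∑ᶠ b ∈ {b : ℤ | (M : ℤ) ∣ b},
            (couplingPoly m M p 1 ^ 3 * couplingPoly m M p (-1) ^ 3).coeff (0, b) := by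
        rw [coeff_eq m M p, ← hQ]
        push_cast
        ring
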